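/- Suppose there is κ > 0 such that for all coprime positive integers a, b, c with a + b = c, (log(c/a))/log₂*(c) ≤ exp(κ · (log₃* rad(bc) / log₂* rad(bc)) · log rad(bc)). Then for all coprime positive integers a, b, c with a + b = c and τ > 0 satisfying a ≤ c / exp((log c)^τ · log₂*(c)), one has log c ≤ exp(τ⁻¹ κ · (log₃* rad(bc) / log₂* rad(bc)) · log rad(bc)). -/
import Mathlib


/-- The radical of a natural number: product of its distinct prime divisors. -/
def rad (n : ℕ) : ℕ := ∏ p ∈ n.primeFactors, p

/-- `log₂*(t) = max(1, log log t)`. -/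
noncomputable def log2star (t : ℝ) : ℝ := max 1 (Real.log (Real.log t))

/-- `log₃*(t) = max(1, log log log t)`. -/
noncomputable def log3star (t : ℝ) : ℝ := max 1 (Real.log (Real.log (Real.log t)))

theorem stmt_7 (κ : ℝ) (hκ : 0 < κ)
    (habc : ∀ a b c : ℕ, 0 < a → 0 < b → Nat.Coprime a b → a + b = c →
      Real.log ((c : ℝ) / a) / log2star c ≤
        Real.exp (κ * (log3star (rad (b * c)) / log2star (rad (b * c))) *
          Real.log (rad (b * c)))) :
    ∀ a b c : ℕ, 0 < a → 0 < b → Nat.Coprime a b → a + b = c →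
      ∀ τ : ℝ, 0 < τ →
      (a : ℝ) ≤ (c : ℝ) / Real.exp ((Real.log c) ^ τ * log2star c) →
      Real.log c ≤
        Real.exp (τ⁻¹ * κ * (log3star (rad (b * c)) / log2star (rad (b * c))) *
          Real.log (rad (b * c))) := by
  intro a b c ha hb hcop hsum τ hτ hale
  set X := κ * (log3star (rad (b * c)) / log2star (rad (b * c))) *
      Real.log (rad (b * c)) with hXdef
  have hc2 : (2 : ℕ) ≤ c := by omega
  have hc1 : (1 : ℝ) < (c : ℝ) := by exact_mod_cast hc2
  have hlogc : 0 < Real.log c := Real.log_pos hc1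
  have hL2 : (1 : ℝ) ≤ log2star c := le_max_left _ _
  have hL2pos : (0 : ℝ) < log2star c := lt_of_lt_of_le one_pos hL2
  have hapos : (0 : ℝ) < a := by exact_mod_cast ha
  -- exp K ≤ c / a
  have hexp : Real.exp ((Real.log c) ^ τ * log2star c) ≤ (c : ℝ) / a := by
    rw [le_div_iff₀ hapos]
    rw [le_div_iff₀ (Real.exp_pos _)] at hale
    linarith [hale]
  have hK : (Real.log c) ^ τ * log2star c ≤ Real.log ((c : ℝ) / a) := by
    have := Real.log_le_log (Real.exp_pos _) hexp
    rwa [Real.log_exp] at this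
  have hstep : (Real.log c) ^ τ ≤ Real.log ((c : ℝ) / a) / log2star c := by
    rw [le_div_iff₀ hL2pos]; exact hK
  have hE : (Real.log c) ^ τ ≤ Real.exp X :=
    hstep.trans (habc a b c ha hb hcop hsum)
  -- take τ⁻¹ power
  have hpow : ((Real.log c) ^ τ) ^ τ⁻¹ ≤ (Real.exp X) ^ τ⁻¹ :=
    Real.rpow_le_rpow (Real.rpow_nonneg hlogc.le τ) hE (inv_nonneg.mpr hτ.le)
  rw [Real.rpow_rpow_inv hlogc.le hτ.ne',
    Real.rpow_def_of_pos (Real.exp_pos _), Real.log_exp] at hpow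
  calc Real.log c ≤ Real.exp (X * τ⁻¹) := hpow
    _ = _ := by rw [hXdef]; ring_nf
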